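/- Let T be a finite tree and let e₁, …, e_k (k ≥ 1) be pairwise distinct edges of T. For each i let A_i and B_i denote the two connected components of T − e_i, and suppose that for all i ≠ j both endpoints of e_j lie in A_i. Then: (a) there is a vertex of T that lies in every A_i; (b) the vertex sets of B₁, …, B_k are pairwise disjoint; and (c) every edge of T is exactly one of the following: one of the edges e₁, …, e_k, an edge of exactly one of the subtrees B_i, or an edge both of whose endpoints lie in the intersection of the vertex sets of all the A_i. -/

import Mathlib

/-- The connected component of `u` in the graph `T` with the edge `s(u, v)` deleted.
For a tree `T` and an edge `uv`, `edgeSide T u v` and `edgeSide T v u` are the two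
connected components of `T − uv`. -/
def edgeSide {V : Type*} (T : SimpleGraph V) (u v : V) : Set V :=
  {w | (T.deleteEdges {s(u, v)}).Reachable u w}

open SimpleGraph

section
variable {V : Type*} {T : SimpleGraph V} {u v x y w : V}

lemma mem_edgeSide_swap_iff {T : SimpleGraph V} {u v w : V} :
    w ∈ edgeSide T v u ↔ (T.deleteEdges {s(u, v)}).Reachable v w := by
  unfold edgeSide; rw [Sym2.eq_swap]; exact Iff.rfl

lemma mem_edgeSide_self : u ∈ edgeSide T u v := Reachable.refl u

lemma not_reachable_of_tree (hT : T.IsTree) (h : T.Adj u v) :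
    ¬ (T.deleteEdges {s(u, v)}).Reachable u v :=
  (isBridge_iff.mp (isAcyclic_iff_forall_adj_isBridge.mp hT.2 h))

lemma edgeSide_disjoint (hT : T.IsTree) (h : T.Adj u v) :
    Disjoint (edgeSide T u v) (edgeSide T v u) := by
  rw [Set.disjoint_left]
  intro w hw hw'
  rw [mem_edgeSide_swap_iff] at hw'
  exact not_reachable_of_tree hT h (hw.trans hw'.symm)

/-- closure of "side membership" along walks of `T`. -/
lemma edgeSide_walk_closure (h : T.Adj u v) {z w : V} (p : T.Walk z w)
    (hz : (T.deleteEdges {s(u, v)}).Reachable u z ∨ (T.deleteEdges {s(u, v)}).Reachable v z) :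
    (T.deleteEdges {s(u, v)}).Reachable u w ∨ (T.deleteEdges {s(u, v)}).Reachable v w := by
  revert hz
  induction p with
  | nil => exact id
  | cons h' q ih =>
    intro hz
    apply ih
    rename_i z x _
    by_cases he : s(z, x) = s(u, v)
    · rcases Sym2.eq_iff.mp he with ⟨rfl, rfl⟩ | ⟨rfl, rfl⟩
      · exact Or.inr (Reachable.refl _)
      · exact Or.inl (Reachable.refl _)
    · have hadj : (T.deleteEdges {s(u, v)}).Adj z x := by simp [he, h']
      exact hz.imp (fun hr => hr.trans hadj.reachable) (fun hr => hr.trans hadj.reachable)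

lemma edgeSide_union (hT : T.IsTree) (h : T.Adj u v) (w : V) :
    w ∈ edgeSide T u v ∨ w ∈ edgeSide T v u := by
  obtain ⟨p⟩ := hT.isConnected u w
  exact (edgeSide_walk_closure h p (Or.inl (Reachable.refl u))).imp id
    fun hr => mem_edgeSide_swap_iff.mpr hr

/-- If `x` (an endpoint of another edge) lies in `edgeSide T u v` and
`v ∈ edgeSide T x y`, then the whole component `edgeSide T v u` lies in `edgeSide T x y`. -/
lemma edgeSide_subset (hT : T.IsTree) (huv : T.Adj u v)
    (hx : x ∈ edgeSide T u v) (hv : v ∈ edgeSide T x y) :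
    edgeSide T v u ⊆ edgeSide T x y := by
  classical
  intro w hw
  rw [mem_edgeSide_swap_iff] at hw
  obtain ⟨p⟩ := hw
  by_cases he : s(x, y) ∈ p.edges
  · exfalso
    have hxs : x ∈ p.support := p.fst_mem_support_of_mem_edges he
    have : x ∈ edgeSide T v u := by
      rw [mem_edgeSide_swap_iff]
      exact ⟨p.takeUntil x hxs⟩
    exact (edgeSide_disjoint hT huv).ne_of_mem hx this rfl
  · have hq : ∀ e ∈ p.edges, e ∈ (T.deleteEdges {s(x, y)}).edgeSet := by
      intro e hep
      have := p.edges_subset_edgeSet hep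
      rw [edgeSet_deleteEdges] at this ⊢
      refine ⟨this.1, ?_⟩
      simp only [Set.mem_singleton_iff]
      rintro rfl
      exact he hep
    exact hv.trans ⟨p.transfer _ hq⟩

lemma mem_edgeSide_of_adj (hT : T.IsTree) (huv : T.Adj u v) (hxy : T.Adj x y)
    (he : s(x, y) ≠ s(u, v)) (hx : x ∈ edgeSide T u v) : y ∈ edgeSide T u v :=
  hx.trans (by simp [he, hxy] : (T.deleteEdges {s(u, v)}).Adj x y).reachable

end

/-- Let `T` be a finite tree with pairwise distinct edges
`eᵢ = (a i)(b i)` for `i : Fin k`, `k ≥ 1`; write `Aᵢ = edgeSide T (a i) (b i)` and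
`Bᵢ = edgeSide T (b i) (a i)` for the two components of `T − eᵢ`, and suppose that for
`i ≠ j` both endpoints of `e j` lie in `Aᵢ`. Then (a) some vertex lies in every `Aᵢ`;
(b) the `Bᵢ` are pairwise disjoint; and (c) every edge of `T` is exactly one of: one of
the `eᵢ`, an edge of exactly one of the subtrees `Bᵢ`, or an edge with both endpoints in
`⋂ i, Aᵢ`. -/
theorem statement_10 {V : Type*} [Fintype V] (T : SimpleGraph V) (hT : T.IsTree)
    (k : ℕ) (hk : 1 ≤ k) (a b : Fin k → V) (hadj : ∀ i, T.Adj (a i) (b i))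
    (hdist : ∀ i j : Fin k, i ≠ j → s(a i, b i) ≠ s(a j, b j))
    (hA : ∀ i j : Fin k, i ≠ j →
      a j ∈ edgeSide T (a i) (b i) ∧ b j ∈ edgeSide T (a i) (b i)) :
    (∃ v : V, ∀ i : Fin k, v ∈ edgeSide T (a i) (b i)) ∧
    (∀ i j : Fin k, i ≠ j →
      Disjoint (edgeSide T (b i) (a i)) (edgeSide T (b j) (a j))) ∧
    (∀ x y : V, T.Adj x y →
      ((∃ i : Fin k, s(x, y) = s(a i, b i)) ∧
        ¬ (∃ i : Fin k, x ∈ edgeSide T (b i) (a i) ∧ y ∈ edgeSide T (b i) (a i)) ∧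
        ¬ ((x ∈ ⋂ i : Fin k, edgeSide T (a i) (b i)) ∧
            (y ∈ ⋂ i : Fin k, edgeSide T (a i) (b i)))) ∨
      ((∃! i : Fin k, x ∈ edgeSide T (b i) (a i) ∧ y ∈ edgeSide T (b i) (a i)) ∧
        ¬ (∃ i : Fin k, s(x, y) = s(a i, b i)) ∧
        ¬ ((x ∈ ⋂ i : Fin k, edgeSide T (a i) (b i)) ∧
            (y ∈ ⋂ i : Fin k, edgeSide T (a i) (b i)))) ∨
      (((x ∈ ⋂ i : Fin k, edgeSide T (a i) (b i)) ∧
          (y ∈ ⋂ i : Fin k, edgeSide T (a i) (b i))) ∧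
        ¬ (∃ i : Fin k, s(x, y) = s(a i, b i)) ∧
        ¬ (∃ i : Fin k, x ∈ edgeSide T (b i) (a i) ∧ y ∈ edgeSide T (b i) (a i)))) := by
  have hABdisj : ∀ i, Disjoint (edgeSide T (a i) (b i)) (edgeSide T (b i) (a i)) :=
    fun i => edgeSide_disjoint hT (hadj i)
  have hUnion : ∀ i (w : V), w ∈ edgeSide T (a i) (b i) ∨ w ∈ edgeSide T (b i) (a i) := by
    intro i w
    have := edgeSide_union hT ((hadj i).symm) w
    rcases edgeSide_union hT (hadj i) w with h | h
    · exact Or.inl h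
    · exact Or.inr h
  have hBA : ∀ i j : Fin k, i ≠ j →
      edgeSide T (b i) (a i) ⊆ edgeSide T (a j) (b j) := fun i j hij =>
    edgeSide_subset hT (hadj i) (hA i j hij).1 (hA j i hij.symm).2
  have hBdisj : ∀ i j : Fin k, i ≠ j →
      Disjoint (edgeSide T (b i) (a i)) (edgeSide T (b j) (a j)) := fun i j hij =>
    Disjoint.mono_left (hBA i j hij) (hABdisj j)
  have ha_notB : ∀ i j : Fin k, a i ∉ edgeSide T (b j) (a j) := by
    intro i j hmem
    by_cases hij : i = j
    · subst hij
      exact (hABdisj i).ne_of_mem mem_edgeSide_self hmem rfl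
    · exact (hABdisj j).ne_of_mem (hA j i (Ne.symm hij)).1 hmem rfl
  have hb_notA : ∀ i : Fin k, b i ∉ edgeSide T (a i) (b i) := by
    intro i hmem
    exact (hABdisj i).ne_of_mem hmem mem_edgeSide_self rfl
  refine ⟨?_, hBdisj, ?_⟩
  · refine ⟨a ⟨0, hk⟩, fun i => ?_⟩
    by_cases hi : i = ⟨0, hk⟩
    · subst hi; exact mem_edgeSide_self
    · exact (hA i ⟨0, hk⟩ hi).1
  · intro x y hxy
    by_cases hP1 : ∃ i : Fin k, s(x, y) = s(a i, b i)
    · obtain ⟨i, hi⟩ := hP1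
      left
      refine ⟨⟨i, hi⟩, ?_, ?_⟩
      · rintro ⟨j, hxB, hyB⟩
        rcases Sym2.eq_iff.mp hi with ⟨rfl, rfl⟩ | ⟨rfl, rfl⟩
        · exact ha_notB i j hxB
        · exact ha_notB i j hyB
      · rintro ⟨hxI, hyI⟩
        rcases Sym2.eq_iff.mp hi with ⟨rfl, rfl⟩ | ⟨rfl, rfl⟩
        · exact hb_notA i (Set.mem_iInter.mp hyI i)
        · exact hb_notA i (Set.mem_iInter.mp hxI i)
    · by_cases hP2 : ∃ i : Fin k, x ∈ edgeSide T (b i) (a i) ∧ y ∈ edgeSide T (b i) (a i)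
      · obtain ⟨j, hj⟩ := hP2
        right; left
        refine ⟨⟨j, hj, fun j' hj' => ?_⟩, hP1, ?_⟩
        · by_contra hne
          exact (hBdisj j' j hne).ne_of_mem hj'.1 hj.1 rfl
        · rintro ⟨hxI, _⟩
          exact (hABdisj j).ne_of_mem (Set.mem_iInter.mp hxI j) hj.1 rfl
      · right; right
        push_neg at hP1
        have hstep : ∀ i : Fin k, x ∉ edgeSide T (b i) (a i) ∧ y ∉ edgeSide T (b i) (a i) := by
          intro i
          have hba : s(b i, a i) = s(a i, b i) := Sym2.eq_swap
          have he : s(x, y) ≠ s(b i, a i) := by rw [hba]; exact hP1 i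
          have he' : s(y, x) ≠ s(b i, a i) := by
            rw [show s(y, x) = s(x, y) from Sym2.eq_swap, hba]; exact hP1 i
          constructor
          · intro hxB
            exact hP2 ⟨i, hxB, mem_edgeSide_of_adj hT (hadj i).symm hxy he hxB⟩
          · intro hyB
            exact hP2 ⟨i, mem_edgeSide_of_adj hT (hadj i).symm hxy.symm he' hyB, hyB⟩
        refine ⟨⟨Set.mem_iInter.mpr fun i => ?_, Set.mem_iInter.mpr fun i => ?_⟩,
          fun ⟨i, hi⟩ => hP1 i hi, hP2⟩
        · exact (hUnion i x).resolve_right (hstep i).1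
        · exact (hUnion i y).resolve_right (hstep i).2
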